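/- Under the homogeneous Dawid–Skene model with constant assignment probability q, an infinite sequence of workers, and majority voting using the first M workers: for any fixed N ≥ 1, if lim_{M→∞} (1/M)·Σ_{i=1}^M w_i exists and is strictly greater than 1/L, then the error rate E_N^(M) = (1/N)·Σ_{j=1}^N 1{ŷ_j^(M) ≠ y_j} converges to 0 in probability as M → ∞. -/

import Mathlib

open MeasureTheory ProbabilityTheory Real Filter

noncomputable section

namespace CrowdSeq

/-- Conditional law of `Z i j ∈ Fin (L+1)` (`0` = missing) given the true label `y j = k`
under the homogeneous Dawid–Skene model with constant assignment probability `q` and an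
infinite sequence of worker accuracies `w`. -/
def condLaw {L : ℕ} (q : ℝ) (w : ℕ → ℝ) (i : ℕ) (k : Fin L) (h : Fin (L + 1)) : ℝ :=
  if hz : h = 0 then 1 - q
  else q * (if h.pred hz = k then w i else (1 - w i) / ((L : ℝ) - 1))

end CrowdSeq


section AuxCrowd
open CrowdSeq Finset
variable {L : ℕ} {q : ℝ} {w : ℕ → ℝ}

lemma aux_expect_prod {M : ℕ} {α : Type*} [Fintype α] [DecidableEq α]
    (p φ : Fin M → α → ℝ) :
    ∑ v ∈ Fintype.piFinset (fun _ : Fin M => (Finset.univ : Finset α)),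
        (∏ i, p i (v i)) * ∏ i, φ i (v i) = ∏ i, ∑ a, p i a * φ i a := by
  rw [Finset.prod_univ_sum]
  exact Finset.sum_congr rfl fun v _ => (Finset.prod_mul_distrib).symm

lemma aux_cheby {M : ℕ} {α : Type*} [Fintype α] [DecidableEq α]
    (p : Fin M → α → ℝ) (hp0 : ∀ i a, 0 ≤ p i a) (hp1 : ∀ i, ∑ a, p i a = 1)
    (X : Fin M → α → ℝ) (hX : ∀ i a, |X i a| ≤ 1)
    (m : ℝ) (hm : 0 < m) (hmean : m ≤ ∑ i, ∑ a, p i a * X i a) :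
    (∑ v ∈ Fintype.piFinset (fun _ : Fin M => (Finset.univ : Finset α)),
        if (∑ i, X i (v i)) ≤ 0 then ∏ i, p i (v i) else 0) ≤ 4 * M / m ^ 2 := by
  set μi : Fin M → ℝ := fun i => ∑ a, p i a * X i a with hμi
  set Y : Fin M → α → ℝ := fun i a => X i a - μi i with hY
  have hμabs : ∀ i, |μi i| ≤ 1 := by
    intro i
    calc |μi i| ≤ ∑ a, |p i a * X i a| := Finset.abs_sum_le_sum_abs _ _
      _ ≤ ∑ a, p i a := by
          apply Finset.sum_le_sum
          intro a _
          rw [abs_mul, abs_of_nonneg (hp0 i a)]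
          calc p i a * |X i a| ≤ p i a * 1 :=
                mul_le_mul_of_nonneg_left (hX i a) (hp0 i a)
            _ = p i a := mul_one _
      _ = 1 := hp1 i
  have hYabs : ∀ i a, |Y i a| ≤ 2 := by
    intro i a
    calc |Y i a| ≤ |X i a| + |μi i| := abs_sub _ _
      _ ≤ 1 + 1 := add_le_add (hX i a) (hμabs i)
      _ = 2 := by norm_num
  have hYmean : ∀ i, ∑ a, p i a * Y i a = 0 := by
    intro i
    simp only [hY, mul_sub, Finset.sum_sub_distrib, ← Finset.sum_mul, hp1, one_mul]
    simp [hμi]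
  have hm0 : m ≤ ∑ i, μi i := hmean
  have hPnn : ∀ v : Fin M → α, 0 ≤ ∏ i, p i (v i) := fun v =>
    Finset.prod_nonneg fun i _ => hp0 i (v i)
  -- pointwise bound
  have key : ∀ v : Fin M → α,
      (if (∑ i, X i (v i)) ≤ 0 then ∏ i, p i (v i) else 0)
        ≤ (∏ i, p i (v i)) * (∑ i, Y i (v i)) ^ 2 / m ^ 2 := by
    intro v
    by_cases hc : (∑ i, X i (v i)) ≤ 0
    · rw [if_pos hc]
      have hs : (∑ i, Y i (v i)) = (∑ i, X i (v i)) - ∑ i, μi i := by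
        simp [hY, Finset.sum_sub_distrib]
      have h1 : (∑ i, Y i (v i)) ≤ -m := by rw [hs]; linarith
      have h2 : m ^ 2 ≤ (∑ i, Y i (v i)) ^ 2 := by nlinarith
      rw [le_div_iff₀ (by positivity)]
      nlinarith [mul_le_mul_of_nonneg_left h2 (hPnn v)]
    · rw [if_neg hc]
      exact div_nonneg (mul_nonneg (hPnn v) (sq_nonneg _)) (sq_nonneg _)
  -- second moment computation
  have main : (∑ v ∈ Fintype.piFinset (fun _ : Fin M => (Finset.univ : Finset α)),
      (∏ i, p i (v i)) * (∑ i, Y i (v i)) ^ 2) ≤ 4 * M := by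
    have expand : ∀ v : Fin M → α,
        (∑ i, Y i (v i)) ^ 2 = ∑ i, ∑ j, Y i (v i) * Y j (v j) := by
      intro v; rw [sq, Finset.sum_mul_sum]
    have swap : (∑ v ∈ Fintype.piFinset (fun _ : Fin M => (Finset.univ : Finset α)),
        (∏ i, p i (v i)) * (∑ i, Y i (v i)) ^ 2)
        = ∑ i, ∑ j, ∑ v ∈ Fintype.piFinset (fun _ : Fin M => (Finset.univ : Finset α)),
            (∏ l, p l (v l)) * (Y i (v i) * Y j (v j)) := by
      simp_rw [expand, Finset.mul_sum]
      rw [Finset.sum_comm]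
      exact Finset.sum_congr rfl fun i _ => Finset.sum_comm
    rw [swap]
    have term : ∀ i j : Fin M,
        (∑ v ∈ Fintype.piFinset (fun _ : Fin M => (Finset.univ : Finset α)),
            (∏ l, p l (v l)) * (Y i (v i) * Y j (v j)))
          ≤ if i = j then 4 else 0 := by
      intro i j
      set φ : Fin M → α → ℝ :=
        fun l a => (if l = i then Y i a else 1) * (if l = j then Y j a else 1) with hφ
      have hprod : ∀ v : Fin M → α, (∏ l, φ l (v l)) = Y i (v i) * Y j (v j) := by
        intro v
        simp only [hφ, Finset.prod_mul_distrib]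
        congr 1
        · simpa using Finset.prod_ite_eq' Finset.univ i (fun l => Y i (v l))
        · simpa using Finset.prod_ite_eq' Finset.univ j (fun l => Y j (v l))
      have heq : (∑ v ∈ Fintype.piFinset (fun _ : Fin M => (Finset.univ : Finset α)),
            (∏ l, p l (v l)) * (Y i (v i) * Y j (v j)))
          = ∏ l, ∑ a, p l a * φ l a := by
        rw [← aux_expect_prod p φ]
        exact Finset.sum_congr rfl fun v _ => by rw [hprod v]
      rw [heq]
      by_cases hij : i = j
      · subst hij
        rw [if_pos rfl]
        have hfac : (∏ l, ∑ a, p l a * φ l a) = ∑ a, p i a * φ i a := by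
          apply Finset.prod_eq_single i
          · intro l _ hl
            simp [hφ, hl, hp1 l]
          · simp
        rw [hfac]
        simp only [hφ, if_pos rfl]
        calc ∑ a, p i a * (Y i a * Y i a) ≤ ∑ a, p i a * 4 := by
              apply Finset.sum_le_sum
              intro a _
              apply mul_le_mul_of_nonneg_left ?_ (hp0 i a)
              have := hYabs i a
              nlinarith [abs_nonneg (Y i a), sq_abs (Y i a)]
          _ = 4 := by rw [← Finset.sum_mul, hp1, one_mul]
      · rw [if_neg hij]
        apply le_of_eq
        apply Finset.prod_eq_zero (Finset.mem_univ i)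
        simp only [hφ, if_pos rfl, if_neg hij, mul_one]
        exact hYmean i
    calc (∑ i, ∑ j, ∑ v ∈ Fintype.piFinset (fun _ : Fin M => (Finset.univ : Finset α)),
            (∏ l, p l (v l)) * (Y i (v i) * Y j (v j)))
        ≤ ∑ i : Fin M, ∑ j : Fin M, (if i = j then (4:ℝ) else 0) :=
          Finset.sum_le_sum fun i _ => Finset.sum_le_sum fun j _ => term i j
      _ = ∑ i : Fin M, (4:ℝ) := by
          apply Finset.sum_congr rfl
          intro i _
          simp
      _ = 4 * M := by simp [mul_comm]
  calc (∑ v ∈ Fintype.piFinset (fun _ : Fin M => (Finset.univ : Finset α)),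
        if (∑ i, X i (v i)) ≤ 0 then ∏ i, p i (v i) else 0)
      ≤ ∑ v ∈ Fintype.piFinset (fun _ : Fin M => (Finset.univ : Finset α)),
          (∏ i, p i (v i)) * (∑ i, Y i (v i)) ^ 2 / m ^ 2 :=
        Finset.sum_le_sum fun v _ => key v
    _ = (∑ v ∈ Fintype.piFinset (fun _ : Fin M => (Finset.univ : Finset α)),
          (∏ i, p i (v i)) * (∑ i, Y i (v i)) ^ 2) / m ^ 2 := by
        rw [Finset.sum_div]
    _ ≤ (4 * M) / m ^ 2 := by
        apply div_le_div_of_nonneg_right main ?_ |>.trans_eq rfl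
        positivity

lemma aux_Lsub (hL : 2 ≤ L) : (1:ℝ) ≤ (L:ℝ) - 1 := by
  have : (2:ℝ) ≤ L := by exact_mod_cast hL
  linarith

lemma condLaw_zero (i : ℕ) (k : Fin L) : condLaw q w i k 0 = 1 - q := by
  simp [condLaw]

lemma condLaw_succ (i : ℕ) (k b : Fin L) :
    condLaw q w i k b.succ = q * (if b = k then w i else (1 - w i) / ((L : ℝ) - 1)) := by
  rw [condLaw, dif_neg (Fin.succ_ne_zero b)]
  simp [Fin.pred_succ]

lemma condLaw_nonneg (hL : 2 ≤ L) (hq0 : 0 < q) (hq1 : q ≤ 1)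
    (hw0 : ∀ i, 0 ≤ w i) (hw1 : ∀ i, w i ≤ 1)
    (i : ℕ) (k : Fin L) (a : Fin (L + 1)) : 0 ≤ condLaw q w i k a := by
  rcases Fin.eq_zero_or_eq_succ a with h | ⟨b, rfl⟩
  · subst h; rw [condLaw_zero]; linarith
  · rw [condLaw_succ]
    apply mul_nonneg hq0.le
    split
    · exact hw0 i
    · exact div_nonneg (by linarith [hw1 i]) (by linarith [aux_Lsub hL])

lemma ite_sum_eval (hL : 2 ≤ L) (k : Fin L) (ww : ℝ) :
    ∑ b : Fin L, (if b = k then ww else (1 - ww) / ((L : ℝ) - 1)) = 1 := by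
  have hLne : ((L:ℝ) - 1) ≠ 0 := by linarith [aux_Lsub hL]
  rw [← Finset.add_sum_erase Finset.univ _ (Finset.mem_univ k)]
  rw [if_pos rfl]
  have h2 : ∑ b ∈ Finset.univ.erase k, (if b = k then ww else (1 - ww) / ((L : ℝ) - 1))
      = ((L : ℝ) - 1) * ((1 - ww) / ((L : ℝ) - 1)) := by
    rw [Finset.sum_congr rfl (fun b hb => if_neg (Finset.ne_of_mem_erase hb))]
    rw [Finset.sum_const, Finset.card_erase_of_mem (Finset.mem_univ k)]
    simp only [Finset.card_univ, Fintype.card_fin, nsmul_eq_mul]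
    congr 1
    have : 1 ≤ L := by omega
    push_cast [Nat.cast_sub this]
    ring
  rw [h2, mul_div_cancel₀ _ hLne]
  ring

lemma condLaw_sum (hL : 2 ≤ L) (i : ℕ) (k : Fin L) :
    ∑ a : Fin (L + 1), condLaw q w i k a = 1 := by
  rw [Fin.sum_univ_succ]
  simp only [condLaw_zero, condLaw_succ]
  rw [← Finset.mul_sum, ite_sum_eval hL k (w i), mul_one]
  ring

lemma condLaw_succ_self (i : ℕ) (k : Fin L) : condLaw q w i k k.succ = q * w i := by
  rw [condLaw_succ, if_pos rfl]

lemma condLaw_succ_ne (i : ℕ) {k h : Fin L} (hne : h ≠ k) :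
    condLaw q w i k h.succ = q * ((1 - w i) / ((L : ℝ) - 1)) := by
  rw [condLaw_succ, if_neg hne]

def extv {L M : ℕ} (v : Fin M → Fin (L + 1)) : ℕ → Fin (L + 1) :=
  fun i => if hi : i < M then v ⟨i, hi⟩ else 0

lemma extv_iff {L M : ℕ} {Ω : Type*} (Zj : ℕ → Ω → Fin (L + 1)) (ω : Ω)
    (v : Fin M → Fin (L + 1)) :
    (∀ i < M, Zj i ω = extv v i) ↔ (fun i : Fin M => Zj i ω) = v := by
  constructor
  · intro h
    funext i
    have := h i.val i.isLt
    rwa [extv, dif_pos i.isLt, Fin.eta] at this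
  · intro h i hi
    rw [extv, dif_pos hi]
    exact congrFun h ⟨i, hi⟩

lemma event_measure {Ω : Type*} [MeasurableSpace Ω] (μ : Measure Ω) [IsProbabilityMeasure μ]
    {L : ℕ} (yj : Ω → Fin L) (Zj : ℕ → Ω → Fin (L + 1))
    (hym : Measurable yj) (hZm : ∀ i, Measurable (Zj i))
    (pk : ℝ) (q : ℝ) (w : ℕ → ℝ) (k : Fin L)
    (hlaw : ∀ (M : ℕ) (h : ℕ → Fin (L + 1)),
      (μ {ω | yj ω = k ∧ ∀ i < M, Zj i ω = h i}).toReal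
        = pk * ∏ i ∈ Finset.range M, condLaw q w i k (h i))
    (M : ℕ) (c : (Fin M → Fin (L + 1)) → Prop) [DecidablePred c] :
    (μ {ω | yj ω = k ∧ c (fun i : Fin M => Zj i ω)}).toReal
      = ∑ v ∈ Fintype.piFinset (fun _ : Fin M => (Finset.univ : Finset (Fin (L + 1)))),
          (if c v then pk * ∏ i : Fin M, condLaw q w (i : ℕ) k (v i) else 0) := by
  classical
  set A : (Fin M → Fin (L + 1)) → Set Ω :=
    fun v => {ω | yj ω = k ∧ ∀ i < M, Zj i ω = extv v i} with hA
  set S : Finset (Fin M → Fin (L + 1)) :=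
    (Fintype.piFinset (fun _ : Fin M => (Finset.univ : Finset (Fin (L + 1))))).filter c with hS
  have hAmeas : ∀ v, MeasurableSet (A v) := by
    intro v
    have : A v = (yj ⁻¹' {k}) ∩ ⋂ i ∈ Finset.range M, (Zj i ⁻¹' {extv v i}) := by
      ext ω
      simp [hA, Set.mem_iInter, Finset.mem_range]
    rw [this]
    exact (hym (measurableSet_singleton k)).inter
      (Finset.measurableSet_biInter _ fun i _ => hZm i (measurableSet_singleton _))
  have hunion : {ω | yj ω = k ∧ c (fun i : Fin M => Zj i ω)} = ⋃ v ∈ S, A v := by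
    ext ω
    simp only [Set.mem_setOf_eq, Set.mem_iUnion, hS, Finset.mem_filter,
      Fintype.mem_piFinset, Finset.mem_univ, implies_true, true_and, hA]
    constructor
    · rintro ⟨hy, hc⟩
      exact ⟨fun i : Fin M => Zj i ω, hc, hy, (extv_iff Zj ω _).mpr rfl⟩
    · rintro ⟨v, hc, hy, hv⟩
      rw [extv_iff] at hv
      exact ⟨hy, hv ▸ hc⟩
  have hdisj : (S : Set (Fin M → Fin (L + 1))).PairwiseDisjoint A := by
    intro v _ v' _ hne
    apply Set.disjoint_left.mpr
    rintro ω ⟨_, hv⟩ ⟨_, hv'⟩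
    rw [extv_iff] at hv hv'
    exact hne (hv.symm.trans hv')
  rw [hunion, measure_biUnion_finset hdisj fun v _ => hAmeas v]
  rw [ENNReal.toReal_sum (fun v _ => measure_ne_top μ _)]
  have hAval : ∀ v, (μ (A v)).toReal = pk * ∏ i : Fin M, condLaw q w (i : ℕ) k (v i) := by
    intro v
    rw [hA]
    simp only []
    rw [hlaw M (extv v)]
    congr 1
    rw [← Fin.prod_univ_eq_prod_range (fun i => condLaw q w i k (extv v i)) M]
    apply Finset.prod_congr rfl
    intro i _
    congr 1
    rw [extv, dif_pos i.isLt, Fin.eta]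
  rw [hS, Finset.sum_filter]
  exact Finset.sum_congr rfl fun v _ => by
    by_cases hc : c v
    · rw [if_pos hc, if_pos hc, hAval v]
    · rw [if_neg hc, if_neg hc]

lemma aux_pair {Ω : Type*} [MeasurableSpace Ω] (μ : Measure Ω) [IsProbabilityMeasure μ]
    {L : ℕ} (hL : 2 ≤ L) (yj : Ω → Fin L) (Zj : ℕ → Ω → Fin (L + 1))
    (hym : Measurable yj) (hZm : ∀ i, Measurable (Zj i))
    (pk : ℝ) (q : ℝ) (w : ℕ → ℝ)
    (hq0 : 0 < q) (hq1 : q ≤ 1) (hw0 : ∀ i, 0 ≤ w i) (hw1 : ∀ i, w i ≤ 1)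
    (hpk0 : 0 ≤ pk) (hpk1 : pk ≤ 1)
    (k h : Fin L) (hne : h ≠ k)
    (hlaw : ∀ (M : ℕ) (hh : ℕ → Fin (L + 1)),
      (μ {ω | yj ω = k ∧ ∀ i < M, Zj i ω = hh i}).toReal
        = pk * ∏ i ∈ Finset.range M, condLaw q w i k (hh i))
    (wlim : ℝ)
    (hwlim : Tendsto (fun M : ℕ => (M : ℝ)⁻¹ * ∑ i ∈ Finset.range M, w i)
      atTop (nhds wlim))
    (hwgt : 1 / (L : ℝ) < wlim) :
    Tendsto (fun M : ℕ => (μ {ω | yj ω = k ∧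
        (∑ i ∈ Finset.range M, if Zj i ω = k.succ then (1 : ℝ) else 0)
          ≤ ∑ i ∈ Finset.range M, if Zj i ω = h.succ then (1 : ℝ) else 0}).toReal)
      atTop (nhds 0) := by
  classical
  have hL1 : (1:ℝ) ≤ (L:ℝ) - 1 := aux_Lsub hL
  have hLne : ((L:ℝ) - 1) ≠ 0 := by linarith
  have hLpos : (0:ℝ) < L := by
    have : (2:ℝ) ≤ L := by exact_mod_cast hL
    linarith
  set X : Fin (L + 1) → ℝ :=
    fun a => (if a = k.succ then (1:ℝ) else 0) - (if a = h.succ then (1:ℝ) else 0) with hX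
  set c0 : ℝ := q * ((L:ℝ) * wlim - 1) / ((L:ℝ) - 1) with hc0def
  have hwgt' : 1 < (L:ℝ) * wlim := by
    have := mul_lt_mul_of_pos_left hwgt hLpos
    rwa [mul_one_div, div_self hLpos.ne'] at this
  have hc0 : 0 < c0 := by
    apply div_pos (mul_pos hq0 (by linarith)) (by linarith)
  -- the per-worker mean
  have hmean_i : ∀ i : ℕ, (∑ a : Fin (L + 1), condLaw q w i k a * X a)
      = q * w i - q * ((1 - w i) / ((L:ℝ) - 1)) := by
    intro i
    have hterm : ∀ a : Fin (L + 1), condLaw q w i k a * X a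
        = (if a = k.succ then condLaw q w i k a else 0)
          - (if a = h.succ then condLaw q w i k a else 0) := by
      intro a
      simp [hX, mul_sub, mul_ite, mul_one, mul_zero]
    rw [Finset.sum_congr rfl fun a _ => hterm a, Finset.sum_sub_distrib,
      Finset.sum_ite_eq' Finset.univ, Finset.sum_ite_eq' Finset.univ]
    simp [condLaw_succ_self, condLaw_succ_ne i hne]
  have hXabs : ∀ a : Fin (L + 1), |X a| ≤ 1 := by
    intro a
    have hsne : k.succ ≠ h.succ := by
      intro e
      exact hne (Fin.succ_injective _ e).symm
    by_cases h1 : a = k.succ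
    · have h2 : ¬ a = h.succ := fun h2 => hsne (h1.symm.trans h2)
      simp only [hX, if_pos h1, if_neg h2]
      norm_num
    · by_cases h2 : a = h.succ
      · simp only [hX, if_neg h1, if_pos h2]
        norm_num
      · simp only [hX, if_neg h1, if_neg h2]
        norm_num
  -- identity for the error probability
  have hident : ∀ M : ℕ, (μ {ω | yj ω = k ∧
        (∑ i ∈ Finset.range M, if Zj i ω = k.succ then (1 : ℝ) else 0)
          ≤ ∑ i ∈ Finset.range M, if Zj i ω = h.succ then (1 : ℝ) else 0}).toReal
      = pk * ∑ v ∈ Fintype.piFinset (fun _ : Fin M => (Finset.univ : Finset (Fin (L + 1)))),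
          (if (∑ i : Fin M, X (v i)) ≤ 0 then ∏ i : Fin M, condLaw q w (i : ℕ) k (v i) else 0) := by
    intro M
    have hset : {ω | yj ω = k ∧
        (∑ i ∈ Finset.range M, if Zj i ω = k.succ then (1 : ℝ) else 0)
          ≤ ∑ i ∈ Finset.range M, if Zj i ω = h.succ then (1 : ℝ) else 0}
        = {ω | yj ω = k ∧ (fun v : Fin M → Fin (L + 1) => (∑ i : Fin M, X (v i)) ≤ 0)
            (fun i : Fin M => Zj i ω)} := by
      ext ω
      have hXsum : (∑ i : Fin M, X (Zj (i : ℕ) ω))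
          = (∑ i ∈ Finset.range M, if Zj i ω = k.succ then (1 : ℝ) else 0)
            - (∑ i ∈ Finset.range M, if Zj i ω = h.succ then (1 : ℝ) else 0) := by
        rw [← Fin.sum_univ_eq_sum_range (fun i => if Zj i ω = k.succ then (1:ℝ) else 0) M,
          ← Fin.sum_univ_eq_sum_range (fun i => if Zj i ω = h.succ then (1:ℝ) else 0) M,
          ← Finset.sum_sub_distrib]
      simp only [Set.mem_setOf_eq, hXsum]
      constructor
      · rintro ⟨hy, hle⟩; exact ⟨hy, by linarith⟩
      · rintro ⟨hy, hle⟩; exact ⟨hy, by linarith⟩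
    rw [hset, event_measure μ yj Zj hym hZm pk q w k hlaw M
      (fun v : Fin M → Fin (L + 1) => (∑ i : Fin M, X (v i)) ≤ 0), Finset.mul_sum]
    exact Finset.sum_congr rfl fun v _ => by
      by_cases hc : (∑ i : Fin M, X (v i)) ≤ 0 <;> simp [hc]
  -- asymptotics of the mean
  have hsum_id : ∀ M : ℕ, (∑ i ∈ Finset.range M, (q * w i - q * ((1 - w i) / ((L:ℝ) - 1))))
      = q * (∑ i ∈ Finset.range M, w i)
        - q * (((M:ℝ) - ∑ i ∈ Finset.range M, w i) / ((L:ℝ) - 1)) := by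
    intro M
    rw [Finset.sum_sub_distrib, ← Finset.mul_sum]
    congr 1
    rw [← Finset.mul_sum]
    congr 1
    rw [← Finset.sum_div]
    congr 1
    rw [Finset.sum_sub_distrib, Finset.sum_const, Finset.card_range]
    simp
  have hF : Tendsto (fun M : ℕ => q * ((M:ℝ)⁻¹ * ∑ i ∈ Finset.range M, w i)
      - q * ((1 - (M:ℝ)⁻¹ * ∑ i ∈ Finset.range M, w i) / ((L:ℝ) - 1)))
      atTop (nhds (q * wlim - q * ((1 - wlim) / ((L:ℝ) - 1)))) :=
    (hwlim.const_mul q).sub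
      (((tendsto_const_nhds.sub hwlim).div_const ((L:ℝ) - 1)).const_mul q)
  have hlimval : q * wlim - q * ((1 - wlim) / ((L:ℝ) - 1)) = c0 := by
    rw [hc0def]; field_simp; ring
  have hmtend : Tendsto (fun M : ℕ => (M:ℝ)⁻¹
      * ∑ i ∈ Finset.range M, (q * w i - q * ((1 - w i) / ((L:ℝ) - 1))))
      atTop (nhds c0) := by
    rw [← hlimval]
    apply Tendsto.congr' ?_ hF
    filter_upwards [eventually_ge_atTop 1] with M hM
    have hM0 : (M:ℝ) ≠ 0 := by
      have : (1:ℝ) ≤ M := by exact_mod_cast hM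
      linarith
    rw [hsum_id M]
    field_simp
  have hev2 : ∀ᶠ M : ℕ in atTop, c0 / 2 ≤ (M:ℝ)⁻¹
      * ∑ i ∈ Finset.range M, (q * w i - q * ((1 - w i) / ((L:ℝ) - 1))) :=
    hmtend.eventually (eventually_ge_nhds (by linarith))
  -- eventual bound
  have hevbound : ∀ᶠ M : ℕ in atTop, (μ {ω | yj ω = k ∧
        (∑ i ∈ Finset.range M, if Zj i ω = k.succ then (1 : ℝ) else 0)
          ≤ ∑ i ∈ Finset.range M, if Zj i ω = h.succ then (1 : ℝ) else 0}).toReal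
      ≤ 16 / c0 ^ 2 * (M:ℝ)⁻¹ := by
    filter_upwards [eventually_ge_atTop 1, hev2] with M hM1 hM2
    have hMpos : (0:ℝ) < M := by exact_mod_cast hM1
    have hmM : c0 / 2 * M ≤ ∑ i ∈ Finset.range M, (q * w i - q * ((1 - w i) / ((L:ℝ) - 1))) := by
      have := mul_le_mul_of_nonneg_left hM2 hMpos.le
      rwa [← mul_assoc, mul_inv_cancel₀ hMpos.ne', one_mul, mul_comm ((M:ℝ)) (c0/2)] at this
    have hcheb := aux_cheby (fun i : Fin M => condLaw q w (i : ℕ) k) 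
      (fun i a => condLaw_nonneg hL hq0 hq1 hw0 hw1 _ k a)
      (fun i => condLaw_sum hL _ k)
      (fun _ a => X a) (fun _ a => hXabs a)
      (c0 / 2 * M) (by positivity) ?_
    · have htail_nn : 0 ≤ ∑ v ∈ Fintype.piFinset (fun _ : Fin M => (Finset.univ : Finset (Fin (L + 1)))),
          (if (∑ i : Fin M, X (v i)) ≤ 0 then ∏ i : Fin M, condLaw q w (i : ℕ) k (v i) else 0) := by
        apply Finset.sum_nonneg
        intro v _
        split
        · exact Finset.prod_nonneg fun i _ => condLaw_nonneg hL hq0 hq1 hw0 hw1 _ k _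
        · exact le_rfl
      rw [hident M]
      calc pk * ∑ v ∈ Fintype.piFinset (fun _ : Fin M => (Finset.univ : Finset (Fin (L + 1)))),
            (if (∑ i : Fin M, X (v i)) ≤ 0 then ∏ i : Fin M, condLaw q w (i : ℕ) k (v i) else 0)
          ≤ 1 * (4 * M / (c0 / 2 * M) ^ 2) := mul_le_mul hpk1 hcheb htail_nn zero_le_one
        _ = 16 / c0 ^ 2 * (M:ℝ)⁻¹ := by
            field_simp
            ring
    · rw [show (∑ i : Fin M, ∑ a : Fin (L + 1), condLaw q w (i : ℕ) k a * X a)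
          = ∑ i ∈ Finset.range M, (q * w i - q * ((1 - w i) / ((L:ℝ) - 1))) from ?_]
      · exact hmM
      · rw [← Fin.sum_univ_eq_sum_range (fun i => q * w i - q * ((1 - w i) / ((L:ℝ) - 1))) M]
        exact Finset.sum_congr rfl fun i _ => hmean_i i
  have hg : Tendsto (fun M : ℕ => 16 / c0 ^ 2 * (M:ℝ)⁻¹) atTop (nhds 0) := by
    simpa using (tendsto_inv_atTop_nhds_zero_nat (𝕜 := ℝ)).const_mul (16 / c0 ^ 2)
  exact squeeze_zero' (Eventually.of_forall fun M => ENNReal.toReal_nonneg) hevbound hg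

end AuxCrowd

/-- Under the homogeneous Dawid–Skene model with constant assignment
probability `q`, an infinite sequence of workers, and majority voting using the first `M`
workers: if `lim_M (1/M)Σ_{i<M} w_i` exists and exceeds `1/L`, then the error rate
`E_N^(M)` converges to `0` in probability as `M → ∞`. -/
theorem mv_error_rate_tendsto_zero_in_probability
    {Ω : Type*} [MeasurableSpace Ω] (μ : Measure Ω) [IsProbabilityMeasure μ]
    {N L : ℕ} (hN : 0 < N) (hL : 2 ≤ L)
    (y : Fin N → Ω → Fin L) (Z : ℕ → Fin N → Ω → Fin (L + 1))
    (hym : ∀ j, Measurable (y j)) (hZm : ∀ i j, Measurable (Z i j))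
    (pri : Fin L → ℝ) (q : ℝ) (w : ℕ → ℝ)
    (hpri : ∀ k, 0 ≤ pri k) (hq0 : 0 < q) (hq1 : q ≤ 1)
    (hw0 : ∀ i, 0 ≤ w i) (hw1 : ∀ i, w i ≤ 1)
    (hprior : ∀ (j : Fin N) (k : Fin L), (μ {ω | y j ω = k}).toReal = pri k)
    (hlaw : ∀ (j : Fin N) (k : Fin L) (M : ℕ) (h : ℕ → Fin (L + 1)),
      (μ {ω | y j ω = k ∧ ∀ i < M, Z i j ω = h i}).toReal
        = pri k * ∏ i ∈ Finset.range M, CrowdSeq.condLaw q w i k (h i))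
    (hindep : iIndepFun
      (fun j ω => (y j ω, fun i : ℕ => Z i j ω)) μ)
    (yhatM : ℕ → Fin N → Ω → Fin L) (hyhatm : ∀ M j, Measurable (yhatM M j))
    (hyhat : ∀ (M : ℕ) (j : Fin N) (ω : Ω) (k : Fin L),
      (∑ i ∈ Finset.range M, if Z i j ω = k.succ then (1 : ℝ) else 0)
        ≤ ∑ i ∈ Finset.range M, if Z i j ω = (yhatM M j ω).succ then (1 : ℝ) else 0)
    (wlim : ℝ)
    (hwlim : Tendsto (fun M : ℕ => (M : ℝ)⁻¹ * ∑ i ∈ Finset.range M, w i)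
      atTop (nhds wlim))
    (hwgt : 1 / (L : ℝ) < wlim) :
    ∀ ε : ℝ, 0 < ε →
      Tendsto (fun M : ℕ =>
          (μ {ω | ε ≤ (N : ℝ)⁻¹ *
            ∑ j, if yhatM M j ω ≠ y j ω then (1 : ℝ) else 0}).toReal)
        atTop (nhds 0) := by
  intro ε hε
  classical
  set Ev : ℕ → Fin N → Fin L → Fin L → Set Ω := fun M j k h =>
    {ω | y j ω = k ∧ (∑ i ∈ Finset.range M, if Z i j ω = k.succ then (1:ℝ) else 0)
        ≤ ∑ i ∈ Finset.range M, if Z i j ω = h.succ then (1:ℝ) else 0} with hEv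
  have hpk1 : ∀ (j : Fin N) (k : Fin L), pri k ≤ 1 := by
    intro j k
    rw [← hprior j k]
    calc (μ {ω | y j ω = k}).toReal ≤ (μ Set.univ).toReal :=
          ENNReal.toReal_mono (measure_ne_top μ _) (measure_mono (Set.subset_univ _))
      _ = 1 := by simp
  have hT : ∀ (j : Fin N) (k h : Fin L), h ≠ k →
      Filter.Tendsto (fun M => (μ (Ev M j k h)).toReal) Filter.atTop (nhds 0) := by
    intro j k h hne
    exact aux_pair μ hL (y j) (fun i => Z i j) (hym j) (fun i => hZm i j)
      (pri k) q w hq0 hq1 hw0 hw1 (hpri k) (hpk1 j k) k h hne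
      (fun M hh => hlaw j k M hh) wlim hwlim hwgt
  have hsub : ∀ M : ℕ, {ω | ε ≤ (N : ℝ)⁻¹ * ∑ j, if yhatM M j ω ≠ y j ω then (1 : ℝ) else 0}
      ⊆ ⋃ j, ⋃ k, ⋃ h, (if h = k then (∅ : Set Ω) else Ev M j k h) := by
    intro M ω hω
    simp only [Set.mem_setOf_eq] at hω
    have hex : ∃ j, yhatM M j ω ≠ y j ω := by
      by_contra hno
      push_neg at hno
      have hzero : (∑ j, if yhatM M j ω ≠ y j ω then (1:ℝ) else 0) = 0 :=
        Finset.sum_eq_zero fun j _ => by simp [hno j]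
      rw [hzero, mul_zero] at hω
      linarith
    obtain ⟨j, hj⟩ := hex
    refine Set.mem_iUnion.mpr ⟨j, Set.mem_iUnion.mpr ⟨y j ω,
      Set.mem_iUnion.mpr ⟨yhatM M j ω, ?_⟩⟩⟩
    rw [if_neg hj]
    exact ⟨rfl, hyhat M j ω (y j ω)⟩
  have hEvMeas : ∀ M j k h, MeasurableSet (if h = k then (∅ : Set Ω) else Ev M j k h) := by
    intro M j k h
    by_cases hhk : h = k
    · simp [hhk]
    · rw [if_neg hhk]
      have : Ev M j k h = (y j ⁻¹' {k}) ∩ {ω |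
          (∑ i ∈ Finset.range M, if Z i j ω = k.succ then (1:ℝ) else 0)
            ≤ ∑ i ∈ Finset.range M, if Z i j ω = h.succ then (1:ℝ) else 0} := by
        ext ω; simp [hEv]
      rw [this]
      refine ((hym j) (measurableSet_singleton k)).inter ?_
      apply measurableSet_le
      · apply Finset.measurable_sum
        intro i _
        exact Measurable.ite ((hZm i j) (measurableSet_singleton _))
          measurable_const measurable_const
      · apply Finset.measurable_sum
        intro i _
        exact Measurable.ite ((hZm i j) (measurableSet_singleton _))
          measurable_const measurable_const
  have hbound : ∀ M : ℕ, (μ {ω | ε ≤ (N : ℝ)⁻¹ *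
        ∑ j, if yhatM M j ω ≠ y j ω then (1 : ℝ) else 0}).toReal
      ≤ ∑ j : Fin N, ∑ k : Fin L, ∑ h : Fin L,
          (if h = k then (0:ℝ) else (μ (Ev M j k h)).toReal) := by
    intro M
    have h1 : μ {ω | ε ≤ (N : ℝ)⁻¹ * ∑ j, if yhatM M j ω ≠ y j ω then (1 : ℝ) else 0}
        ≤ ∑ j : Fin N, ∑ k : Fin L, ∑ h : Fin L,
            μ (if h = k then (∅ : Set Ω) else Ev M j k h) := by
      refine (measure_mono (hsub M)).trans ?_
      refine (measure_iUnion_fintype_le _ _).trans ?_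
      refine Finset.sum_le_sum fun j _ => ?_
      refine (measure_iUnion_fintype_le _ _).trans ?_
      refine Finset.sum_le_sum fun k _ => ?_
      exact measure_iUnion_fintype_le _ _
    have h2 : (∑ j : Fin N, ∑ k : Fin L, ∑ h : Fin L,
        μ (if h = k then (∅ : Set Ω) else Ev M j k h)) ≠ ⊤ := by
      refine (ENNReal.sum_lt_top.mpr fun j _ => ENNReal.sum_lt_top.mpr fun k _ =>
        ENNReal.sum_lt_top.mpr fun h _ => measure_lt_top μ _).ne
    calc (μ {ω | ε ≤ (N : ℝ)⁻¹ * ∑ j, if yhatM M j ω ≠ y j ω then (1 : ℝ) else 0}).toReal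
        ≤ (∑ j : Fin N, ∑ k : Fin L, ∑ h : Fin L,
            μ (if h = k then (∅ : Set Ω) else Ev M j k h)).toReal :=
          ENNReal.toReal_mono h2 h1
      _ = ∑ j : Fin N, ∑ k : Fin L, ∑ h : Fin L,
            (if h = k then (0:ℝ) else (μ (Ev M j k h)).toReal) := by
          rw [ENNReal.toReal_sum (fun j _ => (ENNReal.sum_lt_top.mpr fun k _ =>
            ENNReal.sum_lt_top.mpr fun h _ => measure_lt_top μ _).ne)]
          refine Finset.sum_congr rfl fun j _ => ?_
          rw [ENNReal.toReal_sum (fun k _ => (ENNReal.sum_lt_top.mpr fun h _ =>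
            measure_lt_top μ _).ne)]
          refine Finset.sum_congr rfl fun k _ => ?_
          rw [ENNReal.toReal_sum (fun h _ => (measure_lt_top μ _).ne)]
          refine Finset.sum_congr rfl fun h _ => ?_
          by_cases hhk : h = k
          · simp [hhk]
          · rw [if_neg hhk, if_neg hhk]
  have hg : Filter.Tendsto (fun M : ℕ => ∑ j : Fin N, ∑ k : Fin L, ∑ h : Fin L,
      (if h = k then (0:ℝ) else (μ (Ev M j k h)).toReal)) Filter.atTop (nhds 0) := by
    have h1 : Filter.Tendsto (fun M : ℕ => ∑ j : Fin N, ∑ k : Fin L, ∑ h : Fin L,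
        (if h = k then (0:ℝ) else (μ (Ev M j k h)).toReal)) Filter.atTop
        (nhds (∑ _j : Fin N, ∑ _k : Fin L, ∑ _h : Fin L, (0:ℝ))) := by
      refine tendsto_finset_sum _ fun j _ => ?_
      refine tendsto_finset_sum _ fun k _ => ?_
      refine tendsto_finset_sum _ fun h _ => ?_
      by_cases hhk : h = k
      · simp only [if_pos hhk]
        exact tendsto_const_nhds
      · simp only [if_neg hhk]
        exact hT j k h hhk
    simpa using h1
  exact squeeze_zero (fun M => ENNReal.toReal_nonneg) hbound hg
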